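/- Let H = {0,...,q−2}^r ⊂ Z^r and U ⊆ H. The dual code of the toric code C = π_T(F_q[U]) (evaluation at all of (F_q*)^r) is the toric code π_T(F_q[−H \ −U]), i.e. the evaluation code of the span of monomials whose (negated, mod q−1 reduced) exponents do not lie in U. -/

import Mathlib

open MvPolynomial

/-- Evaluation of a polynomial in `r` variables at all points of the torus `(Fˣ)^r`. -/
noncomputable def torusEvalR (F : Type*) [Field F] (r : ℕ) :
    MvPolynomial (Fin r) F →ₗ[F] ((Fin r → Fˣ) → F) :=
  LinearMap.pi fun t : Fin r → Fˣ =>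
    (MvPolynomial.aeval fun i : Fin r => (t i : F)).toLinearMap

/-- The toric code associated to a set `U` of exponent vectors. -/
noncomputable def toricCodeR (F : Type*) [Field F] (r : ℕ) (U : Set (Fin r → ℕ)) :
    Submodule F ((Fin r → Fˣ) → F) :=
  Submodule.map (torusEvalR F r)
    (Submodule.span F {m : MvPolynomial (Fin r) F | ∃ u ∈ U, m = ∏ i, X i ^ u i})

/-- Reduction modulo `q−1` of the negative of an exponent vector in `{0,…,q−2}^r`. -/
def negExp (q r : ℕ) (w : Fin r → ℕ) : Fin r → ℕ := fun i => (q - 1 - w i) % (q - 1)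

section TDaux

set_option linter.unusedSectionVars false

/-- The monomial evaluation function on the torus. -/
def tdMon (F : Type*) [Field F] (r : ℕ) (u : Fin r → ℕ) : (Fin r → Fˣ) → F :=
  fun t => ∏ i, (t i : F) ^ u i

variable {F : Type*} [Field F] [Fintype F] [DecidableEq F]

local notation "q" => Fintype.card F

lemma td_q2 : 2 ≤ q := Fintype.one_lt_card

lemma td_unit_pow_card (s : Fˣ) : (s : F) ^ (q - 1) = 1 := by
  have : s ^ (q - 1) = 1 := by
    rw [← Fintype.card_units (α := F)]; exact pow_card_eq_one
  calc (s : F) ^ (q-1) = ((s ^ (q-1) : Fˣ) : F) := by push_cast; ring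
    _ = 1 := by rw [this]; rfl

lemma td_geom_range (x : Fˣ) :
    ∑ a ∈ Finset.range (q - 1), (x : F) ^ a = if x = 1 then -1 else 0 := by
  split_ifs with h
  · subst h
    simp only [Units.val_one, one_pow, Finset.sum_const, Finset.card_range, nsmul_eq_mul, mul_one]
    have h1 : (1:ℕ) ≤ q := le_trans one_le_two td_q2
    rw [Nat.cast_sub h1, Nat.cast_card_eq_zero, Nat.cast_one, zero_sub]
  · have hx : (x : F) ≠ 1 := fun hh => h (Units.ext hh)
    have := geom_sum_mul (x : F) (q - 1)
    rw [td_unit_pow_card, sub_self] at this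
    rcases mul_eq_zero.mp this with h1 | h1
    · exact h1
    · exact absurd (sub_eq_zero.mp h1) hx

lemma td_negexp_pow (s : Fˣ) {a : ℕ} (ha : a < q - 1) :
    (s : F) ^ ((q - 1 - a) % (q - 1)) * (s : F) ^ a = 1 := by
  rw [← pow_add]
  rcases Nat.eq_zero_or_pos a with rfl | hpos
  · simp [Nat.mod_self]
  · have h1 : (q - 1 - a) % (q - 1) = q - 1 - a := Nat.mod_eq_of_lt (by omega)
    have h2 : (q - 1 - a) + a = q - 1 := by omega
    rw [h1, h2, td_unit_pow_card]

lemma td_recon_inner (s t : Fˣ) :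
    ∑ a ∈ Finset.range (q - 1), (s : F) ^ ((q - 1 - a) % (q - 1)) * (t : F) ^ a
      = if s = t then -1 else 0 := by
  have key : ∀ a ∈ Finset.range (q-1),
      (s : F) ^ ((q - 1 - a) % (q - 1)) * (t : F) ^ a = ((s⁻¹ * t : Fˣ) : F) ^ a := by
    intro a ha
    rw [Finset.mem_range] at ha
    have h1 := td_negexp_pow s ha
    have h2 : (s:F) ^ a ≠ 0 := pow_ne_zero _ (Units.ne_zero s)
    have : (s : F) ^ ((q - 1 - a) % (q - 1)) = ((s:F)^a)⁻¹ := by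
      field_simp at h1 ⊢; linear_combination h1
    rw [this]
    push_cast
    rw [mul_pow, ← inv_pow]
  rw [Finset.sum_congr rfl key, td_geom_range]
  simp [inv_mul_eq_one]

lemma td_arith {u w : ℕ} (hu : u ≤ q - 2) (hw : w ≤ q - 2) (h : (q-1) ∣ (u + w)) :
    (q - 1 - w) % (q - 1) = u := by
  have hq : 2 ≤ q := td_q2 (F := F)
  obtain ⟨k, hk⟩ := h
  have hk2 : k ≤ 1 := by
    by_contra hc; push_neg at hc
    have : (q-1) * 2 ≤ (q-1) * k := Nat.mul_le_mul_left _ hc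
    omega
  interval_cases k
  · have hw0 : w = 0 := by omega
    have hu0 : u = 0 := by omega
    subst hw0; subst hu0; simp [Nat.mod_self]
  · have h1 : q - 1 - w = u := by omega
    rw [h1, Nat.mod_eq_of_lt (by omega)]

lemma td_ortho {r : ℕ} (u w : Fin r → ℕ) :
    ∑ t : Fin r → Fˣ, tdMon F r u t * tdMon F r w t
      = ∏ i, (if (q - 1) ∣ (u i + w i) then (-1 : F) else 0) := by
  have h1 : ∀ t : Fin r → Fˣ, tdMon F r u t * tdMon F r w t
      = ∏ i, (t i : F) ^ (u i + w i) := by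
    intro t
    simp [tdMon, ← Finset.prod_mul_distrib, pow_add]
  calc ∑ t : Fin r → Fˣ, tdMon F r u t * tdMon F r w t
      = ∑ t ∈ Fintype.piFinset (fun _ : Fin r => (Finset.univ : Finset Fˣ)),
          ∏ i, (t i : F) ^ (u i + w i) := by
        rw [Fintype.piFinset_univ]; exact Finset.sum_congr rfl fun t _ => h1 t
    _ = ∏ i, ∑ c : Fˣ, (c : F) ^ (u i + w i) :=
        (Finset.prod_univ_sum (fun _ : Fin r => (Finset.univ : Finset Fˣ))
          (fun i c => (c : F) ^ (u i + w i))).symm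
    _ = ∏ i, (if (q - 1) ∣ (u i + w i) then (-1 : F) else 0) := by
        refine Finset.prod_congr rfl fun i _ => ?_
        simpa using FiniteField.sum_pow_units F (u i + w i)

set_option maxHeartbeats 1000000 in
lemma td_recon_prod {r : ℕ} (s t : Fin r → Fˣ) :
    ∑ w ∈ Fintype.piFinset (fun _ : Fin r => Finset.range (q - 1)),
      (∏ i, (s i : F) ^ ((q - 1 - w i) % (q - 1))) * ∏ i, (t i : F) ^ (w i)
      = if s = t then (-1 : F)^r else 0 := by
  calc ∑ w ∈ Fintype.piFinset (fun _ : Fin r => Finset.range (q - 1)),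
      (∏ i, (s i : F) ^ ((q - 1 - w i) % (q - 1))) * ∏ i, (t i : F) ^ (w i)
      = ∑ w ∈ Fintype.piFinset (fun _ : Fin r => Finset.range (q - 1)),
          ∏ i, (s i : F) ^ ((q - 1 - w i) % (q - 1)) * (t i : F) ^ (w i) := by
        exact Finset.sum_congr rfl fun w _ => (Finset.prod_mul_distrib).symm
    _ = ∏ i, ∑ a ∈ Finset.range (q - 1), (s i : F) ^ ((q - 1 - a) % (q - 1)) * (t i : F) ^ a :=
        (Finset.prod_univ_sum (fun _ : Fin r => Finset.range (q - 1))
          (fun i a => (s i : F) ^ ((q - 1 - a) % (q - 1)) * (t i : F) ^ a)).symm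
    _ = ∏ i, (if s i = t i then (-1 : F) else 0) := by
        exact Finset.prod_congr rfl fun i _ => td_recon_inner (s i) (t i)
    _ = if s = t then (-1 : F)^r else 0 := by
        by_cases h : s = t
        · subst h
          simp [Finset.prod_const]
        · obtain ⟨i, hi⟩ : ∃ i, s i ≠ t i := by
            by_contra hc; push_neg at hc; exact h (funext hc)
          rw [if_neg h]
          exact Finset.prod_eq_zero (Finset.mem_univ i) (by simp [hi])

lemma td_recon {r : ℕ} (y : (Fin r → Fˣ) → F) :
    y = ∑ w ∈ Fintype.piFinset (fun _ : Fin r => Finset.range (q - 1)),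
      ((-1 : F)^r * ∑ s : Fin r → Fˣ,
        (∏ i, (s i : F) ^ ((q - 1 - w i) % (q - 1))) * y s) • tdMon F r w := by
  funext t
  simp only [Finset.sum_apply, Pi.smul_apply, smul_eq_mul]
  set W := Fintype.piFinset (fun _ : Fin r => Finset.range (q - 1)) with hW
  have step1 : ∀ w, ((-1 : F)^r * ∑ s : Fin r → Fˣ,
        (∏ i, (s i : F) ^ ((q - 1 - w i) % (q - 1))) * y s) * tdMon F r w t
      = ∑ s : Fin r → Fˣ, (-1 : F)^r *
          ((∏ i, (s i : F) ^ ((q - 1 - w i) % (q - 1))) * tdMon F r w t * y s) := by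
    intro w
    rw [mul_assoc, Finset.sum_mul, Finset.mul_sum]
    exact Finset.sum_congr rfl fun s _ => by ring
  rw [Finset.sum_congr rfl fun w _ => step1 w, Finset.sum_comm]
  have step2 : ∀ s : Fin r → Fˣ, ∑ w ∈ W, (-1 : F)^r *
        ((∏ i, (s i : F) ^ ((q - 1 - w i) % (q - 1))) * tdMon F r w t * y s)
      = (-1 : F)^r * ((if s = t then (-1 : F)^r else 0) * y s) := by
    intro s
    rw [← Finset.mul_sum]
    congr 1
    rw [← td_recon_prod s t, Finset.sum_mul]
    exact Finset.sum_congr rfl fun w _ => by rw [tdMon]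
  rw [Finset.sum_congr rfl fun s _ => step2 s]
  simp only [mul_ite, ite_mul, mul_zero, zero_mul]
  rw [Finset.sum_ite_eq' Finset.univ t, if_pos (Finset.mem_univ t), ← mul_assoc, ← pow_add,
    ← two_mul, pow_mul]
  norm_num

lemma td_eval_monomial {r : ℕ} (u : Fin r → ℕ) :
    torusEvalR F r (∏ i, X i ^ u i) = tdMon F r u := by
  funext t
  simp [torusEvalR, tdMon]

lemma td_code_eq_span {r : ℕ} (U : Set (Fin r → ℕ)) :
    toricCodeR F r U = Submodule.span F (tdMon F r '' U) := by
  rw [toricCodeR, Submodule.map_span]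
  congr 1
  ext f
  constructor
  · rintro ⟨m, ⟨u, hu, rfl⟩, rfl⟩
    exact ⟨u, hu, (td_eval_monomial u).symm⟩
  · rintro ⟨u, hu, rfl⟩
    exact ⟨∏ i, X i ^ u i, ⟨u, hu, rfl⟩, td_eval_monomial u⟩

/-- pairing, linear in the first argument -/
def tdPairL {r : ℕ} (y : (Fin r → Fˣ) → F) : ((Fin r → Fˣ) → F) →ₗ[F] F where
  toFun x := ∑ t : Fin r → Fˣ, x t * y t
  map_add' x z := by
    simp [add_mul, Finset.sum_add_distrib]
  map_smul' c x := by
    simp only [Pi.smul_apply, smul_eq_mul, RingHom.id_apply, Finset.mul_sum]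
    exact Finset.sum_congr rfl fun t _ => by ring

/-- pairing, linear in the second argument -/
def tdPairR {r : ℕ} (x : (Fin r → Fˣ) → F) : ((Fin r → Fˣ) → F) →ₗ[F] F where
  toFun y := ∑ t : Fin r → Fˣ, x t * y t
  map_add' y z := by
    simp [mul_add, Finset.sum_add_distrib]
  map_smul' c y := by
    simp only [Pi.smul_apply, smul_eq_mul, RingHom.id_apply, Finset.mul_sum]
    exact Finset.sum_congr rfl fun t _ => by ring

end TDaux

/-- Let `H = {0,…,q−2}^r` and `U ⊆ H`.  The dual code of the toric code of `U` is
the toric code of `−H \ −U` (reduced modulo `q−1`). -/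
theorem toric_dual_code (F : Type*) [Field F] [Fintype F] [DecidableEq F]
    (r : ℕ) (hr : 1 ≤ r) (U : Set (Fin r → ℕ))
    (hU : ∀ u ∈ U, ∀ i, u i ≤ Fintype.card F - 2) :
    {y : (Fin r → Fˣ) → F | ∀ x ∈ toricCodeR F r U, ∑ t : Fin r → Fˣ, x t * y t = 0} =
      ↑(toricCodeR F r
        {w : Fin r → ℕ | (∀ i, w i ≤ Fintype.card F - 2) ∧
          negExp (Fintype.card F) r w ∉ U}) := by
  classical
  set q := Fintype.card F with hqdef
  have hq2 : 2 ≤ q := td_q2 (F := F)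
  set Wset : Set (Fin r → ℕ) :=
    {w : Fin r → ℕ | (∀ i, w i ≤ q - 2) ∧ negExp q r w ∉ U} with hWset
  ext y
  simp only [Set.mem_setOf_eq, SetLike.mem_coe]
  constructor
  · -- dual ⊆ code
    intro hy
    rw [td_code_eq_span]
    rw [td_recon (F := F) (r := r) y]
    apply Submodule.sum_mem
    intro w hw
    have hwb : ∀ i, w i ≤ q - 2 := by
      intro i
      have := (Fintype.mem_piFinset.mp hw) i
      rw [Finset.mem_range] at this
      omega
    by_cases hmem : negExp q r w ∈ U
    · have hx : tdMon F r (negExp q r w) ∈ toricCodeR F r U := by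
        rw [td_code_eq_span]
        exact Submodule.subset_span ⟨_, hmem, rfl⟩
      have h0 : ∑ s : Fin r → Fˣ, (∏ i, (s i : F) ^ ((q - 1 - w i) % (q - 1))) * y s = 0 := by
        simpa [tdMon, negExp] using hy _ hx
      rw [h0, mul_zero, zero_smul]
      exact Submodule.zero_mem _
    · exact Submodule.smul_mem _ _ (Submodule.subset_span ⟨w, ⟨hwb, hmem⟩, rfl⟩)
  · -- code ⊆ dual
    intro hy x hx
    rw [td_code_eq_span] at hx hy
    have key : Submodule.span F (tdMon F r '' U) ≤ LinearMap.ker (tdPairL y) := by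
      apply Submodule.span_le.mpr
      rintro _ ⟨u, hu, rfl⟩
      have key2 : Submodule.span F (tdMon F r '' Wset) ≤
          LinearMap.ker (tdPairR (tdMon F r u)) := by
        apply Submodule.span_le.mpr
        rintro _ ⟨w, hwmem, rfl⟩
        simp only [SetLike.mem_coe, LinearMap.mem_ker]
        show ∑ t : Fin r → Fˣ, tdMon F r u t * tdMon F r w t = 0
        rw [td_ortho]
        obtain ⟨i, hi⟩ : ∃ i, ¬ (q - 1) ∣ (u i + w i) := by
          by_contra hc
          push_neg at hc
          apply hwmem.2
          have : negExp q r w = u := by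
            funext i
            exact td_arith (F := F) (hU u hu i) (hwmem.1 i) (hc i)
          rwa [this]
        exact Finset.prod_eq_zero (Finset.mem_univ i) (if_neg hi)
      have := key2 hy
      simp only [SetLike.mem_coe, LinearMap.mem_ker] at this ⊢
      show ∑ t : Fin r → Fˣ, tdMon F r u t * y t = 0
      exact this
    have := key hx
    exact this
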